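/- Equality holds in the Welch bound if and only if the vectors form an equiangular tight frame: if v_1, ..., v_N ∈ C^r are unit vectors forming a tight frame (sum of v_i v_i^* = (N/r)·I) with |⟨v_i, v_j⟩| constant equal to α for all i ≠ j, then α = sqrt((N-r)/(r(N-1))). -/

import Mathlib

open Matrix BigOperators

/-- Equality in the Welch bound: an equiangular tight frame has coherence
    `sqrt((N-r)/(r(N-1)))`. -/
theorem stmt_2 (N r : ℕ) (hr : 1 ≤ r) (hN : 2 ≤ N) (hNr : r < N)
    (v : Fin N → Fin r → ℂ)
    (hunit : ∀ i, ∑ k, ‖v i k‖ ^ 2 = 1)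
    (htight : (∑ i, Matrix.vecMulVec (v i) (fun l => (starRingEnd ℂ) (v i l)))
      = ((N : ℂ) / (r : ℂ)) • (1 : Matrix (Fin r) (Fin r) ℂ))
    (α : ℝ) (hα0 : 0 ≤ α) (hα1 : α ≤ 1)
    (heq : ∀ i j : Fin N, i ≠ j → ‖∑ k, (starRingEnd ℂ) (v i k) * v j k‖ = α) :
    α = Real.sqrt (((N : ℝ) - (r : ℝ)) / ((r : ℝ) * ((N : ℝ) - 1))) := by
  classical
  set c : Fin N → Fin N → ℂ := fun i j => ∑ k, (starRingEnd ℂ) (v i k) * v j k with hc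
  set M : Matrix (Fin N) (Fin r) ℂ := Matrix.of v with hM
  have hG : (∑ i, Matrix.vecMulVec (v i) (fun l => (starRingEnd ℂ) (v i l))) = (Mᴴ * M)ᵀ := by
    ext l m
    simp [Matrix.sum_apply, Matrix.vecMulVec_apply, Matrix.mul_apply,
      Matrix.conjTranspose_apply, hM, mul_comm]
  have hA : Mᴴ * M = ((N:ℂ)/r) • 1 := by
    have h := htight
    rw [hG] at h
    have h2 := congrArg Matrix.transpose h
    simpa using h2
  have hr0 : (r:ℂ) ≠ 0 := by exact_mod_cast Nat.cast_ne_zero.mpr (by omega)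
  have htr : Matrix.trace (M * Mᴴ * (M * Mᴴ)) = (N:ℂ)^2 / r := by
    rw [Matrix.mul_assoc, Matrix.trace_mul_comm, ← Matrix.mul_assoc, hA,
      Matrix.smul_mul, Matrix.one_mul, Matrix.smul_mul, hA, smul_smul,
      Matrix.trace_smul, Matrix.trace_one]
    simp only [Fintype.card_fin]
    field_simp
    simp only [smul_eq_mul]
    field_simp
  have hH : ∀ i j, (M * Mᴴ) i j = (starRingEnd ℂ) (c i j) := by
    intro i j
    simp [Matrix.mul_apply, Matrix.conjTranspose_apply, hM, hc, map_sum, mul_comm]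
  have hcconj : ∀ i j, c j i = (starRingEnd ℂ) (c i j) := by
    intro i j
    simp [hc, map_sum, mul_comm]
  have hsum : ∑ i, ∑ j, ((‖c i j‖^2 : ℝ) : ℂ) = (N:ℂ)^2 / r := by
    rw [← htr]
    set A : Matrix (Fin N) (Fin N) ℂ := M * Mᴴ with hAdef
    have htrA : Matrix.trace (A * A) = ∑ i, ∑ j, A i j * A j i := by
      simp [Matrix.trace, Matrix.diag_apply, Matrix.mul_apply]
    rw [htrA]
    refine Finset.sum_congr rfl fun i _ => Finset.sum_congr rfl fun j _ => ?_
    have h1 : A i j = (starRingEnd ℂ) (c i j) := hH i j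
    have h2 : A j i = c i j := by rw [hH j i, ← hcconj j i]
    rw [h1, h2]
    rw [mul_comm ((starRingEnd ℂ) (c i j)) (c i j), Complex.mul_conj']
    norm_cast
  -- real version
  have hN1 : (1:ℝ) ≤ (N:ℝ) - 1 := by
    have : (2:ℝ) ≤ N := by exact_mod_cast hN
    linarith
  have hrR : (0:ℝ) < r := by exact_mod_cast Nat.pos_of_ne_zero (by omega)
  have hNR : (0:ℝ) < N := by positivity
  have hsumR : ∑ i, ∑ j, ‖c i j‖^2 = (N:ℝ)^2 / r := by
    have h2 : (((∑ i, ∑ j, ‖c i j‖^2 : ℝ)) : ℂ) = (((N:ℝ)^2/(r:ℝ) : ℝ) : ℂ) := by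
      push_cast
      exact_mod_cast hsum
    exact_mod_cast h2
  -- compute the double sum via diagonal/off-diagonal split
  have hdiag : ∀ i : Fin N, c i i = 1 := by
    intro i
    have : c i i = ((∑ k, ‖v i k‖^2 : ℝ) : ℂ) := by
      push_cast
      simp only [hc]
      refine Finset.sum_congr rfl fun k _ => ?_
      rw [mul_comm, Complex.mul_conj']
    rw [this, hunit i]
    norm_num
  have hsplit : ∑ i, ∑ j, ‖c i j‖^2 = (N:ℝ) + (N:ℝ) * ((N:ℝ) - 1) * α^2 := by
    have : ∀ i : Fin N, ∑ j, ‖c i j‖^2 = 1 + ((N:ℝ) - 1) * α^2 := by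
      intro i
      rw [← Finset.add_sum_erase _ _ (Finset.mem_univ i)]
      have h1 : ‖c i i‖^2 = 1 := by rw [hdiag i]; simp
      have h2 : ∑ j ∈ Finset.univ.erase i, ‖c i j‖^2 = ((N:ℝ) - 1) * α^2 := by
        rw [Finset.sum_congr rfl (fun j hj => by
          rw [heq i j (Ne.symm (Finset.ne_of_mem_erase hj))])]
        rw [Finset.sum_const, Finset.card_erase_of_mem (Finset.mem_univ i),
          Finset.card_univ, Fintype.card_fin, nsmul_eq_mul]
        have hcast : ((N - 1 : ℕ) : ℝ) = (N:ℝ) - 1 := by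
          push_cast [Nat.cast_sub (by omega : 1 ≤ N)]; ring
        rw [hcast]
      rw [h1, h2]
    rw [Finset.sum_congr rfl (fun i _ => this i), Finset.sum_const, Finset.card_univ]
    simp [nsmul_eq_mul]
    ring
  have hfinal : (N:ℝ) + (N:ℝ) * ((N:ℝ) - 1) * α^2 = (N:ℝ)^2 / r := by
    rw [← hsplit]; exact hsumR
  have hα2 : α^2 = ((N:ℝ) - r) / ((r:ℝ) * ((N:ℝ) - 1)) := by
    have h1 : (N:ℝ) - 1 ≠ 0 := by linarith
    have h2 : (r:ℝ) ≠ 0 := ne_of_gt hrR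
    have h3 : (N:ℝ) ≠ 0 := ne_of_gt hNR
    field_simp at hfinal ⊢
    nlinarith [hfinal]
  rw [← Real.sqrt_sq hα0, hα2]
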